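/- For integers m > k ≥ 0 and any two n×n complex matrices A and B, Tr[S_{m,k}(A,B)] = (m/(m-k)) · Tr[A·S_{m-1,k}(A,B)]. -/
import Mathlib


open Matrix BigOperators

/-- `S A B m k` is the sum of all words of length `m` in the matrices `A` and `B`
in which `B` appears exactly `k` times (the coefficient of `t^k` in `(A+tB)^m`). -/
noncomputable def S {n : ℕ} (A B : Matrix (Fin n) (Fin n) ℂ) (m k : ℕ) :
    Matrix (Fin n) (Fin n) ℂ :=
  ∑ f ∈ Finset.univ.filter
      (fun f : Fin m → Bool => (Finset.univ.filter (fun i => f i = true)).card = k),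
    (List.ofFn (fun i : Fin m => if f i then B else A)).prod

/-- The Frobenius (Euclidean) norm of a complex matrix, `‖A‖ = Tr[AA*]^{1/2}`. -/
noncomputable def frobNorm {n : ℕ} (A : Matrix (Fin n) (Fin n) ℂ) : ℝ :=
  Real.sqrt (Matrix.trace (A * Aᴴ)).re

lemma trace_rotate {n : ℕ} (l : List (Matrix (Fin n) (Fin n) ℂ)) (i : ℕ) (h : i ≤ l.length) :
    ((l.rotate i).prod).trace = l.prod.trace := by
  rw [List.rotate_eq_drop_append_take h, List.prod_append, Matrix.trace_mul_comm,
    ← List.prod_append, List.take_append_drop]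

lemma ofFn_rotate {α : Type*} {p : ℕ} (g : Fin (p+1) → α) (i : Fin (p+1)) :
    (List.ofFn g).rotate i.val = List.ofFn (fun j => g (j + i)) := by
  apply List.ext_getElem
  · simp
  intro j h1 h2
  simp only [List.getElem_rotate, List.length_ofFn, List.getElem_ofFn, Fin.add_def]

/-- rotating a word doesn't change the number of `true`s -/
lemma card_rotate {p : ℕ} (f : Fin (p+1) → Bool) (i : Fin (p+1)) :
    (Finset.univ.filter fun j => f (j + i) = true).card
      = (Finset.univ.filter fun j => f j = true).card := by
  apply Finset.card_bij' (fun j _ => j + i) (fun j _ => j - i) <;>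
    intros a ha <;> simp_all [Finset.mem_filter, sub_add_cancel, add_sub_cancel_right]

/-- counting trues after prepending a `false` -/
lemma card_cons {p : ℕ} (g : Fin (p+1) → Bool) (h0 : g 0 = false) :
    (Finset.univ.filter fun j : Fin p => g j.succ = true).card
      = (Finset.univ.filter fun j : Fin (p+1) => g j = true).card := by
  rw [Finset.card_filter, Finset.card_filter, Fin.sum_univ_succ, h0]
  simp

lemma key_identity {n : ℕ} (p k : ℕ) (A B : Matrix (Fin n) (Fin n) ℂ) (hk : k ≤ p) :
    ((p + 1 - k : ℕ) : ℂ) * (S A B (p+1) k).trace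
      = ((p + 1 : ℕ) : ℂ) * (A * S A B p k).trace := by
  classical
  set w : (Fin (p+1) → Bool) → Matrix (Fin n) (Fin n) ℂ :=
    fun f => (List.ofFn (fun i : Fin (p+1) => if f i then B else A)).prod with hw
  set W : Finset (Fin (p+1) → Bool) :=
    Finset.univ.filter
      (fun f : Fin (p+1) → Bool => (Finset.univ.filter (fun i => f i = true)).card = k) with hW
  -- rotation invariance of trace of a word
  have hrot : ∀ (f : Fin (p+1) → Bool) (i : Fin (p+1)),
      (w (fun j => f (j + i))).trace = (w f).trace := by
    intro f i
    have h1 : w (fun j => f (j + i))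
        = ((List.ofFn (fun j : Fin (p+1) => if f j then B else A)).rotate i.val).prod := by
      rw [ofFn_rotate]
    rw [h1, trace_rotate]
    simp [i.isLt.le]
  -- T : the sum over words starting with A
  set T : ℂ := ∑ g ∈ W.filter (fun g => g 0 = false), (w g).trace with hT
  have main : ((p + 1 - k : ℕ) : ℂ) * (S A B (p+1) k).trace = ((p+1 : ℕ) : ℂ) * T := by
    have hS : (S A B (p+1) k).trace = ∑ f ∈ W, (w f).trace := by
      rw [S, Matrix.trace_sum]
    rw [hS, Finset.mul_sum]
    have step1 : ∀ f ∈ W, ((p + 1 - k : ℕ) : ℂ) * (w f).trace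
        = ∑ i ∈ Finset.univ.filter (fun i => f i = false), (w (fun j => f (j + i))).trace := by
      intro f hf
      have hcard : (Finset.univ.filter (fun i => f i = false)).card = p + 1 - k := by
        have hsplit := Finset.card_filter_add_card_filter_not
          (s := (Finset.univ : Finset (Fin (p+1)))) (p := fun i => f i = true)
        have hfk : (Finset.univ.filter (fun i => f i = true)).card = k := by
          rw [hW] at hf; simpa using hf
        have heq : (Finset.univ.filter fun i => ¬ (f i = true))
            = Finset.univ.filter (fun i => f i = false) := by
          apply Finset.filter_congr; intro i _; simp
        rw [hfk, heq, Finset.card_univ] at hsplit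
        simp at hsplit
        omega
      calc ((p + 1 - k : ℕ) : ℂ) * (w f).trace
          = (Finset.univ.filter (fun i => f i = false)).card • (w f).trace := by
            rw [hcard, nsmul_eq_mul]
        _ = ∑ i ∈ Finset.univ.filter (fun i => f i = false), (w f).trace := by
            rw [Finset.sum_const]
        _ = _ := by
            apply Finset.sum_congr rfl; intro i _; rw [hrot]
    rw [Finset.sum_congr rfl step1]
    rw [Finset.sum_comm' (t' := (Finset.univ : Finset (Fin (p+1))))
      (s' := fun i => W.filter (fun f => f i = false))
      (by intro f i; simp [Finset.mem_filter, and_comm])]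
    have step2 : ∀ i : Fin (p+1),
        ∑ f ∈ W.filter (fun f => f i = false), (w (fun j => f (j + i))).trace = T := by
      intro i
      rw [hT]
      apply Finset.sum_nbij' (fun f => fun j => f (j + i)) (fun g => fun j => g (j - i))
      · intro f hf
        simp only [hW, Finset.mem_filter, Finset.mem_univ, true_and] at hf ⊢
        refine ⟨(card_rotate f i).trans hf.1, by simpa using hf.2⟩
      · intro g hg
        simp only [hW, Finset.mem_filter, Finset.mem_univ, true_and] at hg ⊢
        constructor
        · simp_rw [sub_eq_add_neg]
          exact (card_rotate g (-i)).trans hg.1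
        · simpa using hg.2
      · intro f _; funext j; simp
      · intro g _; funext j; simp
      · intro f _; rfl
    rw [Finset.sum_congr rfl (fun i _ => step2 i), Finset.sum_const, Finset.card_univ,
      nsmul_eq_mul]
    simp
  rw [main]
  congr 1
  -- now T = (A * S A B p k).trace
  rw [hT, S, Matrix.mul_sum, Matrix.trace_sum]
  apply Finset.sum_nbij' (fun g => g ∘ Fin.succ) (fun u => Fin.cons false u)
  · intro g hg
    simp only [hW, Finset.mem_filter, Finset.mem_univ, true_and] at hg ⊢
    rw [← hg.1]
    exact card_cons g hg.2
  · intro u hu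
    simp only [hW, Finset.mem_filter, Finset.mem_univ, true_and] at hu ⊢
    refine ⟨?_, by simp⟩
    rw [← card_cons (Fin.cons false u) (by simp), ← hu]
    simp only [Fin.cons_succ]
  · intro g hg
    simp only [hW, Finset.mem_filter] at hg
    funext j
    refine Fin.cases ?_ ?_ j
    · simp [hg.2]
    · simp
  · intro u _; funext j; simp
  · intro g hg
    simp only [hW, Finset.mem_filter] at hg
    have hcons : (List.ofFn (fun i : Fin (p+1) => if g i then B else A)).prod
        = A * (List.ofFn (fun i : Fin p => if (g ∘ Fin.succ) i then B else A)).prod := by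
      rw [List.ofFn_succ, List.prod_cons, hg.2]
      rfl
    show ((List.ofFn (fun i : Fin (p+1) => if g i then B else A)).prod).trace = _
    rw [hcons]

theorem stmt_1 {n : ℕ} (m k : ℕ) (hkm : k < m) (A B : Matrix (Fin n) (Fin n) ℂ) :
    Matrix.trace (S A B m k) =
      ((m : ℂ) / ((m : ℂ) - (k : ℂ))) * Matrix.trace (A * S A B (m - 1) k) := by
  obtain ⟨p, rfl⟩ : ∃ p, m = p + 1 := ⟨m - 1, by omega⟩
  have hk : k ≤ p := by omega
  have key := key_identity p k A B hk
  have hsub : ((p + 1 - k : ℕ) : ℂ) = ((p + 1 : ℕ) : ℂ) - (k : ℂ) := by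
    push_cast [Nat.cast_sub (by omega : k ≤ p + 1)]; ring
  rw [hsub] at key
  have hne : ((p + 1 : ℕ) : ℂ) - (k : ℂ) ≠ 0 := by
    rw [sub_ne_zero]
    exact_mod_cast (by omega : p + 1 ≠ k)
  simp only [Nat.add_sub_cancel]
  rw [div_mul_eq_mul_div, eq_div_iff hne]
  push_cast at key ⊢
  linear_combination key
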